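/- The Lie algebra D_n = Der_K(P_n) of derivations of the polynomial algebra P_n over a field K of characteristic zero is a simple Lie algebra. -/

import Mathlib

open MvPolynomial

section aux
variable {σ : Type*} {K : Type*} [Field K] [CharZero K]

private lemma aux_coeff_pderiv [DecidableEq σ] (i : σ) (m : σ →₀ ℕ) (f : MvPolynomial σ K) :
    coeff m (pderiv i f) = (m i + 1 : ℕ) * coeff (m + Finsupp.single i 1) f := by
  induction f using MvPolynomial.induction_on' with
  | add p q hp hq => simp [hp, hq, mul_add]
  | monomial s a =>
    rw [pderiv_monomial, coeff_monomial, coeff_monomial]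
    by_cases h : s = m + Finsupp.single i 1
    · subst h
      have h1 : m + Finsupp.single i 1 - Finsupp.single i 1 = m := by
        ext j; simp only [Finsupp.tsub_apply, Finsupp.add_apply]; omega
      rw [if_pos h1, if_pos rfl, Finsupp.add_apply, Finsupp.single_eq_same]
      push_cast
      ring
    · rw [if_neg h, mul_zero]
      by_cases hsi : s i = 0
      · split_ifs with h2
        · simp [hsi]
        · rfl
      · rw [if_neg]
        intro h2
        apply h
        ext j
        have h3 := DFunLike.congr_fun h2 j
        rw [Finsupp.tsub_apply] at h3
        rw [Finsupp.add_apply]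
        rcases eq_or_ne i j with rfl | hij
        · rw [Finsupp.single_eq_same] at h3 ⊢
          omega
        · rw [Finsupp.single_eq_of_ne hij.symm] at h3 ⊢
          omega

private lemma aux_td_pderiv [DecidableEq σ] (i : σ) {f : MvPolynomial σ K} {d : ℕ}
    (h : f.totalDegree ≤ d + 1) : (pderiv i f).totalDegree ≤ d := by
  rw [totalDegree]
  apply Finset.sup_le
  intro m hm
  have h1 : coeff m (pderiv i f) ≠ 0 := mem_support_iff.mp hm
  rw [aux_coeff_pderiv] at h1
  have h2 : coeff (m + Finsupp.single i 1) f ≠ 0 := fun h0 => h1 (by rw [h0, mul_zero])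
  have h3 := le_totalDegree (mem_support_iff.mpr h2)
  have h4 : ((m + Finsupp.single i 1).sum fun _ e => e) = (m.sum fun _ e => e) + 1 := by
    rw [Finsupp.sum_add_index' (fun _ => rfl) (fun _ _ _ => rfl),
      Finsupp.sum_single_index rfl]
  omega

private lemma aux_exists_pderiv_ne_zero [DecidableEq σ] {f : MvPolynomial σ K}
    (h : f.totalDegree ≠ 0) : ∃ i, pderiv i f ≠ 0 := by
  have hf : f ≠ 0 := by rintro rfl; simp at h
  obtain ⟨m, hm, hsup⟩ := f.support.exists_mem_eq_sup (support_nonempty.mpr hf)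
    (fun s => s.sum fun _ e => e)
  have hm1 : (m.sum fun _ e => e) ≠ 0 := by
    rw [totalDegree, hsup] at h
    exact h
  obtain ⟨i, hi⟩ : ∃ i, m i ≠ 0 := by
    by_contra h0
    push_neg at h0
    exact hm1 (by rw [show m = 0 from Finsupp.ext h0]; simp)
  refine ⟨i, fun h0 => ?_⟩
  have hkey := aux_coeff_pderiv i (m - Finsupp.single i 1) f
  rw [h0, coeff_zero] at hkey
  have hadd : m - Finsupp.single i 1 + Finsupp.single i 1 = m :=
    tsub_add_cancel_of_le (Finsupp.single_le_iff.mpr (by omega))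
  rw [hadd] at hkey
  have hc : coeff m f ≠ 0 := mem_support_iff.mp hm
  exact hc ((mul_eq_zero.mp hkey.symm).resolve_left
    (Nat.cast_ne_zero.mpr (Nat.succ_ne_zero _)))

private lemma aux_eq_C_of_td_zero [DecidableEq σ] {f : MvPolynomial σ K} (h : f.totalDegree = 0) :
    f = C (coeff 0 f) := by
  ext m
  rw [coeff_C]
  rcases eq_or_ne m 0 with rfl | hm
  · simp
  · rw [if_neg (fun h0 => hm h0.symm)]
    by_contra h0
    have hmem : m ∈ f.support := mem_support_iff.mpr h0
    have := (totalDegree_eq_zero_iff σ f).mp h m hmem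
    exact hm (Finsupp.ext this)

end aux


section main
variable {n : ℕ} {K : Type*} [Field K] [CharZero K]

private lemma aux_D_apply (D : Derivation K (MvPolynomial (Fin n) K) (MvPolynomial (Fin n) K))
    (p : MvPolynomial (Fin n) K) :
    D p = ∑ i, pderiv i p * D (X i) := by
  induction p using MvPolynomial.induction_on with
  | C a =>
      rw [show (C a : MvPolynomial (Fin n) K) = algebraMap K _ a from rfl,
        Derivation.map_algebraMap]
      simp
  | add p q hp hq => simp [hp, hq, add_mul, Finset.sum_add_distrib]
  | mul_X p i hp =>
      rw [Derivation.leibniz, smul_eq_mul, smul_eq_mul, hp]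
      have key : ∀ j : Fin n, pderiv j (p * X i) * D (X j)
          = X i * (pderiv j p * D (X j)) + p * (pderiv j (X i) * D (X j)) := by
        intro j; rw [pderiv_mul]; ring
      rw [Finset.sum_congr rfl (fun j _ => key j), Finset.sum_add_distrib,
        ← Finset.mul_sum, ← Finset.mul_sum]
      have h2 : ∑ j, pderiv j (X i) * D (X j) = D (X i) := by
        rw [Finset.sum_eq_single i
          (fun j _ hj => by rw [pderiv_X_of_ne (Ne.symm hj), zero_mul])
          (fun h => absurd (Finset.mem_univ i) h)]
        rw [pderiv_X_self, one_mul]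
      rw [h2, add_comm]

private lemma aux_td_D (D : Derivation K (MvPolynomial (Fin n) K) (MvPolynomial (Fin n) K))
    (c : Fin n → K) (hD : ∀ j, D (X j) = C (c j))
    {u : MvPolynomial (Fin n) K} {d : ℕ} (h : u.totalDegree ≤ d + 1) :
    (D u).totalDegree ≤ d := by
  rw [aux_D_apply]
  refine (totalDegree_finset_sum _ _).trans (Finset.sup_le fun j _ => ?_)
  calc (pderiv j u * D (X j)).totalDegree
      ≤ (pderiv j u).totalDegree + (D (X j)).totalDegree := totalDegree_mul _ _
    _ ≤ d + 0 := add_le_add (aux_td_pderiv j h) (by rw [hD j, totalDegree_C])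
    _ = d := add_zero d

private lemma aux_nilp (D : Derivation K (MvPolynomial (Fin n) K) (MvPolynomial (Fin n) K))
    (c : Fin n → K) (hD : ∀ j, D (X j) = C (c j)) :
    ∀ (d : ℕ) (u : MvPolynomial (Fin n) K), u.totalDegree ≤ d → (⇑D)^[d + 1] u = 0 := by
  intro d
  induction d with
  | zero =>
      intro u hu
      rw [show (0 : ℕ) + 1 = 1 from rfl, Function.iterate_one,
        aux_eq_C_of_td_zero (Nat.le_zero.mp hu), ← MvPolynomial.algebraMap_eq]
      exact D.map_algebraMap _
  | succ d ih =>
      intro u hu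
      rw [Function.iterate_succ_apply]
      exact ih (D u) (aux_td_D D c hD hu)

private lemma aux_surj (D : Derivation K (MvPolynomial (Fin n) K) (MvPolynomial (Fin n) K))
    (c : Fin n → K) (hD : ∀ j, D (X j) = C (c j)) (j0 : Fin n) (hc : c j0 ≠ 0)
    (f : MvPolynomial (Fin n) K) : ∃ g, D g = f := by
  classical
  set d := f.totalDegree with hd
  set B : ℕ → MvPolynomial (Fin n) K :=
    fun k => ((-1 : K)^k / (k.factorial * (c j0)^k)) • ((X j0)^k * (⇑D)^[k] f) with hB
  have hfac : ∀ k : ℕ, ((k.factorial : K)) ≠ 0 :=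
    fun k => Nat.cast_ne_zero.mpr (Nat.factorial_ne_zero _)
  have hterm : ∀ k : ℕ,
      D (((-1 : K)^k / ((k+1).factorial * (c j0)^(k+1))) • ((X j0)^(k+1) * (⇑D)^[k] f))
        = B k - B (k+1) := by
    intro k
    have hQ : D ((⇑D)^[k] f) = (⇑D)^[k+1] f := (Function.iterate_succ_apply' _ _ _).symm
    rw [D.map_smul, Derivation.leibniz, Derivation.leibniz_pow, hD j0, hQ, hB]
    simp only [smul_eq_mul, nsmul_eq_mul, MvPolynomial.smul_eq_C_mul, Nat.add_sub_cancel]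
    have key2 : (C ((-1 : K)^k / ((k+1).factorial * (c j0)^(k+1))) : MvPolynomial (Fin n) K)
        = - C ((-1 : K)^(k+1) / ((k+1).factorial * (c j0)^(k+1))) := by
      rw [← map_neg]
      congr 1
      rw [pow_succ]
      ring
    have key : (C ((-1 : K)^k / ((k+1).factorial * (c j0)^(k+1))) : MvPolynomial (Fin n) K)
        * (((k : MvPolynomial (Fin n) K) + 1) * C (c j0))
        = C ((-1 : K)^k / (k.factorial * (c j0)^k)) := by
      have : ((k : MvPolynomial (Fin n) K) + 1) = C ((k : K) + 1) := by
        rw [map_add, map_one, map_natCast]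
      rw [this, ← map_mul, ← map_mul]
      congr 1
      have hk1 : ((k : K) + 1) ≠ 0 := by
        have h0 := Nat.cast_ne_zero (R := K).mpr (Nat.succ_ne_zero k)
        push_cast at h0
        exact h0
      rw [Nat.factorial_succ]
      push_cast
      rw [div_mul_eq_mul_div, div_eq_div_iff
        (mul_ne_zero (mul_ne_zero hk1 (hfac k)) (pow_ne_zero _ hc))
        (mul_ne_zero (hfac k) (pow_ne_zero _ hc))]
      ring
    push_cast
    linear_combination ((X j0 : MvPolynomial (Fin n) K) ^ (k+1) * (⇑D)^[k+1] f) * key2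
      + ((X j0 : MvPolynomial (Fin n) K) ^ k * (⇑D)^[k] f) * key
  refine ⟨∑ k ∈ Finset.range (d+1),
    ((-1 : K)^k / ((k+1).factorial * (c j0)^(k+1))) • ((X j0)^(k+1) * (⇑D)^[k] f), ?_⟩
  rw [map_sum, Finset.sum_congr rfl (fun k _ => hterm k), Finset.sum_range_sub']
  have hB0 : B 0 = f := by simp [hB]
  have hBtop : B (d+1) = 0 := by
    rw [hB]
    simp only [aux_nilp D c hD d f le_rfl, mul_zero, smul_zero]
  rw [hB0, hBtop, sub_zero]

end main

section stepA
variable {n : ℕ} {K : Type*} [Field K] [CharZero K]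

private lemma aux_stepA
    (I : LieIdeal K (Derivation K (MvPolynomial (Fin n) K) (MvPolynomial (Fin n) K))) :
    ∀ (M : ℕ) (x : Derivation K (MvPolynomial (Fin n) K) (MvPolynomial (Fin n) K)),
      x ∈ I → x ≠ 0 → (∀ j, ((x (X j)).totalDegree ≤ M)) →
      ∃ (D : Derivation K (MvPolynomial (Fin n) K) (MvPolynomial (Fin n) K)) (c : Fin n → K),
        D ∈ I ∧ c ≠ 0 ∧ ∀ j, D (X j) = C (c j) := by
  intro M
  induction M with
  | zero =>
      intro x hxI hx0 hbd
      have hC : ∀ j, x (X j) = C (coeff 0 (x (X j))) :=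
        fun j => aux_eq_C_of_td_zero (Nat.le_zero.mp (hbd j))
      refine ⟨x, fun j => coeff 0 (x (X j)), hxI, ?_, hC⟩
      intro h0
      apply hx0
      apply derivation_ext
      intro j
      have hcj : coeff 0 (x (X j)) = 0 := congrFun h0 j
      rw [hC j, hcj, map_zero]
      simp
  | succ M ih =>
      intro x hxI hx0 hbd
      by_cases hall : ∀ j, (x (X j)).totalDegree ≤ M
      · exact ih x hxI hx0 hall
      · push_neg at hall
        obtain ⟨j, hj⟩ := hall
        have hj0 : (x (X j)).totalDegree ≠ 0 := by omega
        obtain ⟨i, hi⟩ := aux_exists_pderiv_ne_zero hj0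
        set x' := ⁅(pderiv i : Derivation K (MvPolynomial (Fin n) K) (MvPolynomial (Fin n) K)),
          x⁆ with hx'
        have happ : ∀ k, x' (X k) = pderiv i (x (X k)) := by
          intro k
          rw [hx', Derivation.commutator_apply]
          have h0 : x (pderiv i (X k)) = 0 := by
            rcases eq_or_ne k i with rfl | hk
            · rw [pderiv_X_self]; exact x.map_one_eq_zero
            · rw [pderiv_X_of_ne hk]; exact map_zero x
          rw [h0, sub_zero]
        refine ih x' (I.lie_mem hxI) ?_ ?_
        · intro h0
          apply hi
          rw [← happ j, h0]
          simp
        · intro k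
          rw [happ k]
          exact aux_td_pderiv i (hbd k)

end stepA

/-- The Lie algebra D_n = Der_K(P_n) of derivations of the polynomial algebra P_n
(n ≥ 1) over a field of characteristic zero is simple. -/
theorem derivation_lie_isSimple (n : ℕ) (hn : 0 < n) (K : Type*) [Field K] [CharZero K] :
    LieAlgebra.IsSimple K (Derivation K (MvPolynomial (Fin n) K) (MvPolynomial (Fin n) K)) := by
  classical
  constructor
  · intro I
    rcases eq_or_ne I ⊥ with hI | hI
    · left; exact hI
    right
    have h1 : ∃ x, x ∈ I ∧ x ≠ 0 := by
      by_contra h0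
      push_neg at h0
      exact hI ((LieSubmodule.eq_bot_iff I).mpr h0)
    obtain ⟨x, hxI, hx0⟩ := h1
    obtain ⟨D, c, hDI, hc0, hDX⟩ := aux_stepA I
      (Finset.univ.sup fun j => ((x (X j)).totalDegree)) x hxI hx0
      (fun j => Finset.le_sup (f := fun j => ((x (X j)).totalDegree)) (Finset.mem_univ j))
    obtain ⟨j0, hj0⟩ := Function.ne_iff.mp hc0
    have hsurj := aux_surj D c hDX j0 (by simpa using hj0)
    have hsingle : ∀ (m : Fin n) (f : MvPolynomial (Fin n) K),
        MvPolynomial.mkDerivation K (Pi.single m f) ∈ I := by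
      intro m f
      obtain ⟨g, hg⟩ := hsurj f
      have key : MvPolynomial.mkDerivation K (Pi.single m f)
          = ⁅D, MvPolynomial.mkDerivation K (Pi.single m g)⁆ := by
        apply derivation_ext
        intro k
        rw [Derivation.commutator_apply, mkDerivation_X, mkDerivation_X, hDX k]
        have hE0 : MvPolynomial.mkDerivation K (Pi.single m g) (C (c k)) = 0 := by
          rw [← MvPolynomial.algebraMap_eq]
          exact Derivation.map_algebraMap _ _
        rw [hE0, sub_zero]
        rcases eq_or_ne k m with rfl | hk
        · rw [Pi.single_eq_same, Pi.single_eq_same, hg]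
        · rw [Pi.single_eq_of_ne hk, Pi.single_eq_of_ne hk, map_zero]
      rw [key, ← lie_skew]
      exact neg_mem (I.lie_mem hDI)
    rw [eq_top_iff]
    intro E _
    have hsum : ∀ (s : Finset (Fin n))
        (F : Fin n → Derivation K (MvPolynomial (Fin n) K) (MvPolynomial (Fin n) K))
        (p : MvPolynomial (Fin n) K), (∑ m ∈ s, F m) p = ∑ m ∈ s, F m p := by
      intro s F p
      induction s using Finset.cons_induction with
      | empty => simp
      | cons a s ha ih => rw [Finset.sum_cons, Finset.sum_cons, Derivation.add_apply, ih]
    have hdecomp : E = ∑ m, MvPolynomial.mkDerivation K (Pi.single m (E (X m))) := by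
      apply derivation_ext
      intro k
      rw [hsum, Finset.sum_congr rfl (fun m _ => mkDerivation_X K (Pi.single m (E (X m))) k),
        Fintype.sum_pi_single]
    rw [hdecomp]
    exact sum_mem fun m _ => hsingle m (E (X m))
  · intro habs
    set i0 : Fin n := ⟨0, hn⟩
    have h1 : (⁅(pderiv i0 : Derivation K (MvPolynomial (Fin n) K) (MvPolynomial (Fin n) K)),
        MvPolynomial.mkDerivation K (Pi.single i0 (X i0))⁆) = 0 := habs.trivial _ _
    have h2 := congrArg (fun (D : Derivation K (MvPolynomial (Fin n) K)
      (MvPolynomial (Fin n) K)) => D (X i0)) h1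
    simp only [Derivation.commutator_apply, mkDerivation_X, Pi.single_eq_same,
      pderiv_X_self, Derivation.map_one_eq_zero, sub_zero] at h2
    exact one_ne_zero h2
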